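/- For every LPP2 probabilistic formula A there exist K ≥ 1, natural numbers l_1, …, l_K, relations op_{ij} ∈ {≥, <}, rationals s_{ij} ∈ ℚ ∩ [0,1], and propositional formulas α^{ij}, each of which is a disjunction of elements of cpnb(A), such that for every LPP2-model R: R ⊨ A if and only if R ⊨ ⋁_{i=1}^{K} ⋀_{j=1}^{l_i} P_{op_{ij} s_{ij}}(α^{ij}), where P_{< s}α abbreviates ¬P_{≥ s}α. -/

import Mathlib

/-- Propositional formulas over a countable set of atomic propositions
(indexed by `ℕ`): `α ::= p | ¬α | α ∧ α`. -/
inductive PropForm : Type where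
  | atom : ℕ → PropForm
  | neg : PropForm → PropForm
  | conj : PropForm → PropForm → PropForm
deriving DecidableEq

/-- The classical extension `v̄` of an evaluation `v : Prop → {true, false}`. -/
def PropForm.eval (v : ℕ → Bool) : PropForm → Bool
  | .atom p => v p
  | .neg α => !(PropForm.eval v α)
  | .conj α β => PropForm.eval v α && PropForm.eval v β

/-- The list of atomic propositions occurring in a propositional formula. -/
def PropForm.atomList : PropForm → List ℕ
  | .atom p => [p]
  | .neg α => α.atomList
  | .conj α β => α.atomList ++ β.atomList

/-- Conjunction of a nonempty list of propositional formulas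
(the value on `[]` is an irrelevant dummy). -/
def conjListProp : List PropForm → PropForm
  | [] => .atom 0
  | [a] => a
  | a :: l => .conj a (conjListProp l)

/-- The literal `±p` determined by a sign function `σ`. -/
def signedLit (σ : ℕ → Bool) (p : ℕ) : PropForm :=
  if σ p then .atom p else .neg (.atom p)

/-- `cpnb A`: the set of conjunctions of positive and negative basic formulas of `A`,
i.e. all formulas of the form `⋀_{p basic subformula of A} ±p`, with exactly one
(signed) conjunct for each basic subformula (= atomic proposition) of `A`. -/
def cpnb (A : PropForm) : Set PropForm :=
  {a | ∃ σ : ℕ → Bool, a = conjListProp (A.atomList.dedup.map (signedLit σ))}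

/-- Rationals in the unit interval `ℚ ∩ [0,1]`. -/
abbrev Prob01 : Type := {s : ℚ // 0 ≤ s ∧ s ≤ 1}

/-- The probabilistic formulas of LPP2 (the non-iterated probabilistic logic over
classical propositional logic): `A ::= P_{≥s} α | ¬A | A ∧ A` with `s ∈ ℚ ∩ [0,1]`
and `α` a propositional formula. -/
inductive PForm : Type where
  | geq : Prob01 → PropForm → PForm
  | neg : PForm → PForm
  | conj : PForm → PForm → PForm

/-- An LPP2-model `⟨W, H, μ, v⟩` (data part): `W` a nonempty set of worlds, `H` a
family of subsets of `W`, `μ` a set function, and `v` an evaluation at each world. -/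
structure LPP2Model where
  W : Type
  ne : Nonempty W
  H : Set (Set W)
  μ : Set W → ℝ
  v : W → ℕ → Bool

/-- `[α]_M = {w ∈ W | v̄_w(α) = true}`. -/
def LPP2Model.truthSet (M : LPP2Model) (α : PropForm) : Set M.W :=
  {w | PropForm.eval (M.v w) α = true}

/-- `M` is an LPP2-model: `H` is a σ-algebra over `W`, `μ : H → [0,1]` is a
σ-additive measure with `μ(W) = 1`, and `[α]_M ∈ H` for every propositional `α`. -/
structure IsLPP2Model (M : LPP2Model) : Prop where
  univ_mem : Set.univ ∈ M.H
  compl_mem : ∀ V ∈ M.H, Vᶜ ∈ M.H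
  iUnion_mem : ∀ f : ℕ → Set M.W, (∀ k, f k ∈ M.H) → (⋃ k, f k) ∈ M.H
  nonneg : ∀ V ∈ M.H, 0 ≤ M.μ V
  le_one : ∀ V ∈ M.H, M.μ V ≤ 1
  total : M.μ Set.univ = 1
  sigma_additive : ∀ f : ℕ → Set M.W, (∀ k, f k ∈ M.H) →
    Pairwise (Function.onFun Disjoint f) →
    HasSum (fun k => M.μ (f k)) (M.μ (⋃ k, f k))
  meas : ∀ α : PropForm, M.truthSet α ∈ M.H

/-- Truth of an LPP2 probabilistic formula in a model:
`M ⊨ P_{≥s} α` iff `μ([α]_M) ≥ s`; `¬` and `∧` are classical. -/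
def PForm.sat (M : LPP2Model) : PForm → Prop
  | .geq s α => (s.1 : ℝ) ≤ M.μ (M.truthSet α)
  | .neg A => ¬ PForm.sat M A
  | .conj A B => PForm.sat M A ∧ PForm.sat M B

/-- The atomic propositions occurring in an LPP2 formula (these are exactly its
basic subformulas). -/
def PForm.atomList : PForm → List ℕ
  | .geq _ α => α.atomList
  | .neg A => A.atomList
  | .conj A B => A.atomList ++ B.atomList

/-- `cpnbP A`: the conjunctions of positive and negative basic formulas of the
LPP2 formula `A`, i.e. all propositional formulas `⋀_{p basic subformula of A} ±p`. -/
def cpnbP (A : PForm) : Set PropForm :=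
  {a | ∃ σ : ℕ → Bool, a = conjListProp (A.atomList.dedup.map (signedLit σ))}

/-- Disjunction `α ∨ β := ¬(¬α ∧ ¬β)` of propositional formulas. -/
def PropForm.disj (α β : PropForm) : PropForm := .neg (.conj (.neg α) (.neg β))

/-- Disjunction of a nonempty list of propositional formulas (dummy value on `[]`). -/
def disjListProp : List PropForm → PropForm
  | [] => .atom 0
  | [a] => a
  | a :: l => PropForm.disj a (disjListProp l)

/-- Disjunction `A ∨ B := ¬(¬A ∧ ¬B)` of LPP2 formulas. -/
def PForm.disj (A B : PForm) : PForm := .neg (.conj (.neg A) (.neg B))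

/-- Conjunction of a nonempty list of LPP2 formulas (dummy value on `[]`). -/
def conjListPF : List PForm → PForm
  | [] => .geq ⟨1, by norm_num⟩ (.atom 0)
  | [A] => A
  | A :: l => .conj A (conjListPF l)

/-- Disjunction of a nonempty list of LPP2 formulas (dummy value on `[]`). -/
def disjListPF : List PForm → PForm
  | [] => .geq ⟨1, by norm_num⟩ (.atom 0)
  | [A] => A
  | A :: l => PForm.disj A (disjListPF l)

/-- The probabilistic literal `P_{op s}(α)` where `op` is `≥` (for `true`) or `<`
(for `false`); `P_{<s} α` abbreviates `¬P_{≥s} α`. -/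
def probLit (x : Bool × Prob01 × PropForm) : PForm :=
  if x.1 then .geq x.2.1 x.2.2 else .neg (.geq x.2.1 x.2.2)


section Aux

abbrev Lit := Bool × Prob01 × PropForm

/-- The sign function determined by a finite list. -/
def sigOf (S : List ℕ) : ℕ → Bool := fun p => decide (p ∈ S)

/-- `⋀_{p ∈ L} ±p` with signs given by `σ`. -/
def bigConj (L : List ℕ) (σ : ℕ → Bool) : PropForm :=
  conjListProp (L.map (signedLit σ))

/-- Satisfying assignments (as sublists of `L`) of `α`. -/
def cands (L : List ℕ) (α : PropForm) : List (List ℕ) :=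
  L.sublists.filter (fun S => PropForm.eval (sigOf S) α)

def dsOf (L : List ℕ) (α : PropForm) : List PropForm :=
  (cands L α).map (fun S => bigConj L (sigOf S))

def zeroP : Prob01 := ⟨0, by norm_num⟩

def litFor (L : List ℕ) (s : Prob01) (α : PropForm) : Lit :=
  if cands L α = [] then
    if s.1 = 0 then (true, zeroP, bigConj L (fun _ => true))
    else (false, zeroP, bigConj L (fun _ => true))
  else (true, s, disjListProp (dsOf L α))

def negLit (x : Lit) : Lit := (!x.1, x.2)

def dnf (L : List ℕ) : PForm → List (List Lit) × List (List Lit)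
  | .geq s α => ([[litFor L s α]], [[negLit (litFor L s α)]])
  | .neg B => ((dnf L B).2, (dnf L B).1)
  | .conj B C =>
    (((dnf L B).1.flatMap fun p => (dnf L C).1.map (p ++ ·)),
     (dnf L B).2 ++ (dnf L C).2)

lemma PropForm.atomList_ne_nil (α : PropForm) : α.atomList ≠ [] := by
  induction α with
  | atom p => simp [PropForm.atomList]
  | neg α ih => simpa [PropForm.atomList] using ih
  | conj α β ih1 ih2 =>
      simp only [PropForm.atomList, ne_eq, List.append_eq_nil_iff, not_and]
      intro h; exact absurd h ih1

lemma PForm.atomList_ne_nil (A : PForm) : A.atomList ≠ [] := by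
  induction A with
  | geq s α => simpa [PForm.atomList] using α.atomList_ne_nil
  | neg B ih => simpa [PForm.atomList] using ih
  | conj B C ih1 ih2 =>
      simp only [PForm.atomList, ne_eq, List.append_eq_nil_iff, not_and]
      intro h; exact absurd h ih1

lemma eval_congr {v v' : ℕ → Bool} {α : PropForm}
    (h : ∀ p ∈ α.atomList, v p = v' p) : PropForm.eval v α = PropForm.eval v' α := by
  induction α with
  | atom p => exact h p (by simp [PropForm.atomList])
  | neg α ih => simp [PropForm.eval]; exact ih h
  | conj α β ih1 ih2 =>
      simp only [PropForm.eval]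
      rw [ih1 (fun p hp => h p (by simp [PropForm.atomList, hp])),
        ih2 (fun p hp => h p (by simp [PropForm.atomList, hp]))]

lemma conjListProp_eval {v : ℕ → Bool} :
    ∀ {l : List PropForm}, l ≠ [] →
      (PropForm.eval v (conjListProp l) = true ↔ ∀ a ∈ l, PropForm.eval v a = true)
  | [], h => absurd rfl h
  | [a], _ => by simp [conjListProp]
  | a :: b :: l, _ => by
      have ih := conjListProp_eval (v := v) (l := b :: l) (by simp)
      simp only [conjListProp, PropForm.eval, Bool.and_eq_true, ih]
      constructor
      · rintro ⟨h1, h2⟩ x hx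
        rcases List.mem_cons.mp hx with hx | hx
        · exact hx ▸ h1
        · exact h2 x hx
      · intro h
        exact ⟨h a (by simp), fun x hx => h x (List.mem_cons_of_mem _ hx)⟩

lemma disjListProp_eval {v : ℕ → Bool} :
    ∀ {l : List PropForm}, l ≠ [] →
      (PropForm.eval v (disjListProp l) = true ↔ ∃ a ∈ l, PropForm.eval v a = true)
  | [], h => absurd rfl h
  | [a], _ => by simp [disjListProp]
  | a :: b :: l, _ => by
      have ih := disjListProp_eval (v := v) (l := b :: l) (by simp)
      simp only [disjListProp, PropForm.disj, PropForm.eval, Bool.not_and,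
        Bool.not_not, Bool.or_eq_true, ih]
      constructor
      · rintro (h | ⟨x, hx, h⟩)
        · exact ⟨a, by simp, h⟩
        · exact ⟨x, List.mem_cons_of_mem _ hx, h⟩
      · rintro ⟨x, hx, h⟩
        rcases List.mem_cons.mp hx with hx | hx
        · exact Or.inl (hx ▸ h)
        · exact Or.inr ⟨x, hx, h⟩

lemma bigConj_eval {v : ℕ → Bool} {L : List ℕ} (hL : L ≠ []) (σ : ℕ → Bool) :
    PropForm.eval v (bigConj L σ) = true ↔ ∀ p ∈ L, v p = σ p := by
  rw [bigConj, conjListProp_eval (by simpa using hL)]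
  constructor
  · intro h p hp
    have := h (signedLit σ p) (List.mem_map_of_mem hp)
    by_cases hσ : σ p = true
    · simpa [signedLit, hσ, PropForm.eval] using this
    · simp only [Bool.not_eq_true] at hσ
      simp only [signedLit, hσ, Bool.false_eq_true, if_false, PropForm.eval, Bool.not_eq_true',
        Bool.not_eq_true] at this ⊢
      exact this
  · intro h a ha
    rcases List.mem_map.mp ha with ⟨p, hp, rfl⟩
    have := h p hp
    by_cases hσ : σ p = true
    · simp [signedLit, hσ, PropForm.eval, this ▸ hσ, this]
    · simp only [Bool.not_eq_true] at hσ
      simp [signedLit, hσ, PropForm.eval, this]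

lemma mem_truth_iff {M : LPP2Model} {L : List ℕ} {α : PropForm}
    (hsub : ∀ p ∈ α.atomList, p ∈ L) (w : M.W) :
    PropForm.eval (M.v w) α = true ↔
      ∃ S ∈ cands L α, ∀ p ∈ L, M.v w p = sigOf S p := by
  constructor
  · intro h
    have hmemS : ∀ p ∈ L, sigOf (L.filter (fun p => M.v w p)) p = M.v w p := by
      intro p hp
      simp only [sigOf, List.mem_filter, hp, true_and]
      cases hvp : M.v w p <;> simp [hvp]
    refine ⟨L.filter (fun p => M.v w p), ?_, ?_⟩
    · rw [cands, List.mem_filter]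
      refine ⟨List.mem_sublists.mpr (List.filter_sublist), ?_⟩
      show PropForm.eval (sigOf (L.filter (fun p => M.v w p))) α = true
      rw [eval_congr (v' := M.v w) (fun p hp => hmemS p (hsub p hp))]
      exact h
    · intro p hp
      exact (hmemS p hp).symm
  · rintro ⟨S, hS, hagree⟩
    rw [cands, List.mem_filter] at hS
    have hev : PropForm.eval (sigOf S) α = true := hS.2
    rw [eval_congr (v' := sigOf S) (fun p hp => hagree p (hsub p hp))]
    exact hev

lemma truthSet_empty {M : LPP2Model} {L : List ℕ} {α : PropForm}
    (hsub : ∀ p ∈ α.atomList, p ∈ L) (hc : cands L α = []) :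
    M.truthSet α = ∅ := by
  ext w
  simp only [LPP2Model.truthSet, Set.mem_setOf_eq, Set.mem_empty_iff_false, iff_false]
  intro h
  rcases (mem_truth_iff hsub w).mp h with ⟨S, hS, _⟩
  simp [hc] at hS

lemma truthSet_disj {M : LPP2Model} {L : List ℕ} {α : PropForm} (hL : L ≠ [])
    (hsub : ∀ p ∈ α.atomList, p ∈ L) (hc : cands L α ≠ []) :
    M.truthSet α = M.truthSet (disjListProp (dsOf L α)) := by
  ext w
  simp only [LPP2Model.truthSet, Set.mem_setOf_eq]
  rw [disjListProp_eval (by simpa [dsOf] using hc), mem_truth_iff hsub w]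
  constructor
  · rintro ⟨S, hS, hagree⟩
    exact ⟨bigConj L (sigOf S), List.mem_map_of_mem hS,
      (bigConj_eval hL _).mpr hagree⟩
  · rintro ⟨d, hd, hev⟩
    rcases List.mem_map.mp hd with ⟨S, hS, rfl⟩
    exact ⟨S, hS, (bigConj_eval hL _).mp hev⟩

lemma meas_empty {M : LPP2Model} (hM : IsLPP2Model M) : M.μ ∅ = 0 := by
  have hmem : (∅ : Set M.W) ∈ M.H := by
    have := hM.compl_mem _ hM.univ_mem
    simpa using this
  have hs := hM.sigma_additive (fun _ => ∅) (fun _ => hmem)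
    (fun i j _ => by simp [Function.onFun])
  simp only [Set.iUnion_empty] at hs
  have h0 : Filter.Tendsto (fun _ : ℕ => M.μ ∅) Filter.atTop (nhds 0) :=
    hs.summable.tendsto_atTop_zero
  exact tendsto_nhds_unique tendsto_const_nhds h0

lemma lit_correct {M : LPP2Model} (hM : IsLPP2Model M) {L : List ℕ} (hL : L ≠ [])
    {α : PropForm} (hsub : ∀ p ∈ α.atomList, p ∈ L) (s : Prob01) :
    PForm.sat M (probLit (litFor L s α)) ↔ PForm.sat M (.geq s α) := by
  by_cases hc : cands L α = []
  · have hempty := truthSet_empty (M := M) hsub hc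
    have hμ : M.μ (M.truthSet α) = 0 := by rw [hempty, meas_empty hM]
    have hnn : (0:ℝ) ≤ M.μ (M.truthSet (bigConj L fun _ => true)) := hM.nonneg _ (hM.meas _)
    have hz : ((zeroP : ℚ) : ℝ) = 0 := by norm_num [zeroP]
    by_cases hs : s.1 = 0
    · rw [litFor, if_pos hc, if_pos hs]
      simp only [probLit, if_true, PForm.sat, hμ, hz]
      constructor
      · intro _; rw [hs]; norm_num
      · intro _; exact hnn
    · rw [litFor, if_pos hc, if_neg hs]
      simp only [probLit, Bool.false_eq_true, if_false, PForm.sat, hμ, hz]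
      constructor
      · intro h; exact absurd hnn h
      · intro h
        exfalso
        have hpos : (0:ℝ) < (s.1 : ℝ) := by
          exact_mod_cast lt_of_le_of_ne s.2.1 (Ne.symm hs)
        linarith
  · rw [litFor, if_neg hc]
    simp only [probLit, if_true, PForm.sat]
    rw [truthSet_disj hL hsub hc]

lemma negLit_sat {M : LPP2Model} (x : Lit) :
    PForm.sat M (probLit (negLit x)) ↔ ¬ PForm.sat M (probLit x) := by
  rcases x with ⟨b, s, α⟩
  cases b <;> simp [probLit, negLit, PForm.sat, not_not]

def satConj (M : LPP2Model) (part : List Lit) : Prop :=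
  ∀ x ∈ part, PForm.sat M (probLit x)

def satD (M : LPP2Model) (parts : List (List Lit)) : Prop :=
  ∃ part ∈ parts, satConj M part

lemma conjListPF_sat {M : LPP2Model} :
    ∀ {l : List PForm}, l ≠ [] →
      (PForm.sat M (conjListPF l) ↔ ∀ B ∈ l, PForm.sat M B)
  | [], h => absurd rfl h
  | [B], _ => by simp [conjListPF]
  | B :: C :: l, _ => by
      have ih := conjListPF_sat (M := M) (l := C :: l) (by simp)
      simp only [conjListPF, PForm.sat, ih]
      constructor
      · rintro ⟨h1, h2⟩ x hx
        rcases List.mem_cons.mp hx with hx | hx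
        · exact hx ▸ h1
        · exact h2 x hx
      · intro h
        exact ⟨h B (by simp), fun x hx => h x (List.mem_cons_of_mem _ hx)⟩

lemma disjListPF_sat {M : LPP2Model} :
    ∀ {l : List PForm}, l ≠ [] →
      (PForm.sat M (disjListPF l) ↔ ∃ B ∈ l, PForm.sat M B)
  | [], h => absurd rfl h
  | [B], _ => by simp [disjListPF]
  | B :: C :: l, _ => by
      have ih := disjListPF_sat (M := M) (l := C :: l) (by simp)
      simp only [disjListPF, PForm.disj, PForm.sat, ih]
      constructor
      · intro h
        by_cases hB : PForm.sat M B
        · exact ⟨B, by simp, hB⟩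
        · have h' : ∃ x ∈ C :: l, PForm.sat M x := by
            by_contra hn
            exact h ⟨hB, hn⟩
          rcases h' with ⟨x, hx, hsx⟩
          exact ⟨x, List.mem_cons_of_mem _ hx, hsx⟩
      · rintro ⟨x, hx, hsx⟩ ⟨h1, h2⟩
        rcases List.mem_cons.mp hx with hx | hx
        · exact h1 (hx ▸ hsx)
        · exact h2 ⟨x, hx, hsx⟩

def goodLit (L : List ℕ) (x : Lit) : Prop :=
  ∃ ds : List PropForm, ds ≠ [] ∧
    (∀ d ∈ ds, ∃ σ : ℕ → Bool, d = conjListProp (L.map (signedLit σ))) ∧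
    x.2.2 = disjListProp ds

lemma goodLit_litFor (L : List ℕ) (s : Prob01) (α : PropForm) :
    goodLit L (litFor L s α) := by
  by_cases hc : cands L α = []
  · refine ⟨[bigConj L (fun _ => true)], by simp, ?_, ?_⟩
    · rintro d hd
      simp only [List.mem_singleton] at hd
      exact ⟨fun _ => true, hd ▸ rfl⟩
    · rw [litFor, if_pos hc]
      by_cases hs : s.1 = 0 <;> simp [hs, disjListProp]
  · refine ⟨dsOf L α, by simpa [dsOf] using hc, ?_, ?_⟩
    · intro d hd
      rcases List.mem_map.mp hd with ⟨S, _, rfl⟩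
      exact ⟨sigOf S, rfl⟩
    · rw [litFor, if_neg hc]

lemma goodLit_negLit {L : List ℕ} {x : Lit} (h : goodLit L x) : goodLit L (negLit x) := h

lemma dnf_spec (L : List ℕ) (hL : L ≠ []) (B : PForm)
    (hsub : ∀ p ∈ B.atomList, p ∈ L) :
    (dnf L B).1 ≠ [] ∧ (dnf L B).2 ≠ [] ∧
    (∀ part ∈ (dnf L B).1, part ≠ []) ∧ (∀ part ∈ (dnf L B).2, part ≠ []) ∧
    (∀ part ∈ (dnf L B).1, ∀ x ∈ part, goodLit L x) ∧
    (∀ part ∈ (dnf L B).2, ∀ x ∈ part, goodLit L x) ∧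
    (∀ M : LPP2Model, IsLPP2Model M →
      (PForm.sat M B ↔ satD M (dnf L B).1) ∧ (¬ PForm.sat M B ↔ satD M (dnf L B).2)) := by
  induction B with
  | geq s α =>
      have hsub' : ∀ p ∈ α.atomList, p ∈ L := by
        intro p hp; exact hsub p (by simpa [PForm.atomList] using hp)
      refine ⟨by simp [dnf], by simp [dnf], by simp [dnf], by simp [dnf], ?_, ?_, ?_⟩
      · intro part hpart x hx
        simp only [dnf, List.mem_singleton] at hpart
        subst hpart
        simp only [List.mem_singleton] at hx
        exact hx ▸ goodLit_litFor L s α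
      · intro part hpart x hx
        simp only [dnf, List.mem_singleton] at hpart
        subst hpart
        simp only [List.mem_singleton] at hx
        exact hx ▸ goodLit_negLit (goodLit_litFor L s α)
      · intro M hM
        have hl := lit_correct hM hL hsub' s
        constructor
        · rw [← hl]
          constructor
          · intro h
            exact ⟨[litFor L s α], by simp [dnf], fun x hx => by
              simp only [List.mem_singleton] at hx; exact hx ▸ h⟩
          · rintro ⟨part, hpart, hc⟩
            simp only [dnf, List.mem_singleton] at hpart
            exact hc _ (hpart ▸ List.mem_singleton.mpr rfl)
        · rw [← hl, ← negLit_sat]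
          constructor
          · intro h
            exact ⟨[negLit (litFor L s α)], by simp [dnf], fun x hx => by
              simp only [List.mem_singleton] at hx; exact hx ▸ h⟩
          · rintro ⟨part, hpart, hc⟩
            simp only [dnf, List.mem_singleton] at hpart
            exact hc _ (hpart ▸ List.mem_singleton.mpr rfl)
  | neg B ih =>
      have hsub' : ∀ p ∈ B.atomList, p ∈ L := by
        intro p hp; exact hsub p (by simpa [PForm.atomList] using hp)
      obtain ⟨h1, h2, h3, h4, h5, h6, h7⟩ := ih hsub'
      refine ⟨h2, h1, h4, h3, h6, h5, ?_⟩
      intro M hM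
      obtain ⟨hp, hn⟩ := h7 M hM
      exact ⟨by simpa [PForm.sat, dnf] using hn, by simpa [PForm.sat, not_not, dnf] using hp⟩
  | conj B C ihB ihC =>
      have hsubB : ∀ p ∈ B.atomList, p ∈ L := by
        intro p hp; exact hsub p (by simp [PForm.atomList, hp])
      have hsubC : ∀ p ∈ C.atomList, p ∈ L := by
        intro p hp; exact hsub p (by simp [PForm.atomList, hp])
      obtain ⟨b1, b2, b3, b4, b5, b6, b7⟩ := ihB hsubB
      obtain ⟨c1, c2, c3, c4, c5, c6, c7⟩ := ihC hsubC
      have hmem : ∀ part, part ∈ (dnf L (.conj B C)).1 ↔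
          ∃ p ∈ (dnf L B).1, ∃ q ∈ (dnf L C).1, part = p ++ q := by
        intro part
        simp only [dnf, List.mem_flatMap, List.mem_map]
        constructor
        · rintro ⟨p, hp, q, hq, rfl⟩; exact ⟨p, hp, q, hq, rfl⟩
        · rintro ⟨p, hp, q, hq, rfl⟩; exact ⟨p, hp, q, hq, rfl⟩
      refine ⟨?_, ?_, ?_, ?_, ?_, ?_, ?_⟩
      · rcases List.exists_cons_of_ne_nil b1 with ⟨p, ps, hps⟩
        have hp : p ∈ (dnf L B).1 := by rw [hps]; exact List.mem_cons_self
        rcases List.exists_cons_of_ne_nil c1 with ⟨q, qs, hqs⟩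
        have hq : q ∈ (dnf L C).1 := by rw [hqs]; exact List.mem_cons_self
        intro h
        have : p ++ q ∈ (dnf L (.conj B C)).1 := (hmem _).mpr ⟨p, hp, q, hq, rfl⟩
        rw [h] at this
        exact absurd this List.not_mem_nil
      · simp only [dnf, ne_eq, List.append_eq_nil_iff]
        rintro ⟨h, -⟩; exact b2 h
      · intro part hpart
        rcases (hmem part).mp hpart with ⟨p, hp, q, hq, rfl⟩
        simp only [ne_eq, List.append_eq_nil_iff, not_and]
        intro h; exact absurd h (b3 p hp)
      · intro part hpart
        simp only [dnf, List.mem_append] at hpart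
        rcases hpart with h | h
        · exact b4 part h
        · exact c4 part h
      · intro part hpart x hx
        rcases (hmem part).mp hpart with ⟨p, hp, q, hq, rfl⟩
        rcases List.mem_append.mp hx with h | h
        · exact b5 p hp x h
        · exact c5 q hq x h
      · intro part hpart x hx
        simp only [dnf, List.mem_append] at hpart
        rcases hpart with h | h
        · exact b6 part h x hx
        · exact c6 part h x hx
      · intro M hM
        obtain ⟨bp, bn⟩ := b7 M hM
        obtain ⟨cp, cn⟩ := c7 M hM
        constructor
        · simp only [PForm.sat, bp, cp]
          constructor
          · rintro ⟨⟨p, hp, hcp⟩, ⟨q, hq, hcq⟩⟩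
            refine ⟨p ++ q, (hmem _).mpr ⟨p, hp, q, hq, rfl⟩, ?_⟩
            intro x hx
            rcases List.mem_append.mp hx with h | h
            · exact hcp x h
            · exact hcq x h
          · rintro ⟨part, hpart, hc⟩
            rcases (hmem part).mp hpart with ⟨p, hp, q, hq, rfl⟩
            exact ⟨⟨p, hp, fun x hx => hc x (List.mem_append.mpr (Or.inl hx))⟩,
              ⟨q, hq, fun x hx => hc x (List.mem_append.mpr (Or.inr hx))⟩⟩
        · simp only [PForm.sat, not_and_or, bn, cn]
          constructor
          · rintro (⟨part, hpart, hc⟩ | ⟨part, hpart, hc⟩)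
            · exact ⟨part, by simp [dnf, hpart], hc⟩
            · exact ⟨part, by simp [dnf, hpart], hc⟩
          · rintro ⟨part, hpart, hc⟩
            simp only [dnf, List.mem_append] at hpart
            rcases hpart with h | h
            · exact Or.inl ⟨part, h, hc⟩
            · exact Or.inr ⟨part, h, hc⟩

end Aux

/-- For every LPP2 probabilistic formula `A` there exist `K ≥ 1`, numbers `l₁, …, l_K`,
relations `op_{ij} ∈ {≥, <}`, rationals `s_{ij} ∈ ℚ ∩ [0,1]`, and propositional
formulas `α^{ij}`, each a (nonempty) disjunction of elements of `cpnb(A)`, such that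
for every LPP2-model `R`:
`R ⊨ A` iff `R ⊨ ⋁_{i=1}^{K} ⋀_{j=1}^{l_i} P_{op_{ij} s_{ij}}(α^{ij})`.
Here the data of the double family is packaged as a nonempty list `parts` of
nonempty lists of triples `(op, s, α)`. -/
theorem lpp2_equiv_dnf_over_cpnb (A : PForm) :
    ∃ parts : List (List (Bool × Prob01 × PropForm)),
      parts ≠ [] ∧
      (∀ part ∈ parts, part ≠ []) ∧
      (∀ part ∈ parts, ∀ x ∈ part, ∃ ds : List PropForm,
        ds ≠ [] ∧ (∀ d ∈ ds, d ∈ cpnbP A) ∧ x.2.2 = disjListProp ds) ∧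
      (∀ M : LPP2Model, IsLPP2Model M →
        (PForm.sat M A ↔
          PForm.sat M (disjListPF (parts.map fun part => conjListPF (part.map probLit))))) := by
  classical
  set L := A.atomList.dedup with hLdef
  have hL : L ≠ [] := by
    simp only [hLdef, ne_eq, List.dedup_eq_nil]
    exact A.atomList_ne_nil
  have hsub : ∀ p ∈ A.atomList, p ∈ L := fun p hp => List.mem_dedup.mpr hp
  obtain ⟨h1, _, h3, _, h5, _, h7⟩ := dnf_spec L hL A hsub
  refine ⟨(dnf L A).1, h1, h3, ?_, ?_⟩
  · intro part hpart x hx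
    obtain ⟨ds, hne, hmem, heq⟩ := h5 part hpart x hx
    refine ⟨ds, hne, ?_, heq⟩
    intro d hd
    obtain ⟨σ, hσ⟩ := hmem d hd
    exact ⟨σ, hσ⟩
  · intro M hM
    rw [(h7 M hM).1]
    rw [disjListPF_sat (by simpa using h1)]
    constructor
    · rintro ⟨part, hpart, hc⟩
      exact ⟨conjListPF (part.map probLit), List.mem_map_of_mem hpart,
        (conjListPF_sat (by simpa using h3 part hpart)).mpr
          (fun B hB => by
            rcases List.mem_map.mp hB with ⟨x, hx, rfl⟩
            exact hc x hx)⟩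
    · rintro ⟨F, hF, hsF⟩
      rcases List.mem_map.mp hF with ⟨part, hpart, rfl⟩
      refine ⟨part, hpart, fun x hx => ?_⟩
      exact (conjListPF_sat (by simpa using h3 part hpart)).mp hsF _
        (List.mem_map_of_mem hx)
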